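/- For integers K ≥ 2 and 2 ≤ M ≤ K, if a scalar-linear answer A (a tuple of F_q-linear combinations of X₁,…,X_K) together with query Q satisfies, for every j in an index set J of size K−M+1−n, H(Z_j | A, Q, X_{n+1}) = 0 for linear functionals Z_j that are linearly independent of each other and of X₁,…,X_{n+1}, and additionally H(X_i | A, Q) = 0 for i = 1,…,n, then H(A) ≥ (K−M+1)·m·log₂ q. -/

import Mathlib

open Finset

open Classical in
/-- Probability mass function of a random variable `X` on a finite space with weights `μ`. -/
noncomputable def pm {Ω α : Type*} [Fintype Ω] (μ : Ω → ℝ) (X : Ω → α) (a : α) : ℝ :=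
  ∑ ω ∈ Finset.univ.filter (fun ω => X ω = a), μ ω

/-- Shannon entropy (in bits) of a random variable `X`. -/
noncomputable def ent {Ω α : Type*} [Fintype Ω] [Fintype α] (μ : Ω → ℝ) (X : Ω → α) : ℝ :=
  -∑ a : α, pm μ X a * Real.logb 2 (pm μ X a)

/-- Conditional Shannon entropy `H(X | Y)` in bits. -/
noncomputable def condEnt {Ω α β : Type*} [Fintype Ω] [Fintype α] [Fintype β]
    (μ : Ω → ℝ) (X : Ω → α) (Y : Ω → β) : ℝ :=
  ent μ (fun ω => (X ω, Y ω)) - ent μ Y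

section L
variable {Ω : Type*} [Fintype Ω] {μ : Ω → ℝ}

open Classical in
lemma pm_eq {α : Type*} (μ : Ω → ℝ) (X : Ω → α) (a : α) :
    pm μ X a = ∑ ω, if X ω = a then μ ω else 0 := by
  rw [pm, Finset.sum_filter]

lemma pm_nonneg (hμ0 : ∀ ω, 0 ≤ μ ω) {α : Type*} (X : Ω → α) (a : α) : 0 ≤ pm μ X a := by
  classical
  rw [pm_eq]
  exact Finset.sum_nonneg fun ω _ => by split <;> simp [hμ0 ω]

lemma sum_pm {α : Type*} [Fintype α] (X : Ω → α) : (∑ a, pm μ X a) = ∑ ω, μ ω := by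
  classical
  simp_rw [pm_eq]
  rw [Finset.sum_comm]
  exact Finset.sum_congr rfl fun ω _ => by simp

lemma mu_le_pm (hμ0 : ∀ ω, 0 ≤ μ ω) {α : Type*} (X : Ω → α) (ω : Ω) :
    μ ω ≤ pm μ X (X ω) := by
  classical
  rw [pm_eq]
  have := Finset.single_le_sum (f := fun ω' => if X ω' = X ω then μ ω' else 0)
    (fun i _ => by split <;> simp [hμ0 i]) (Finset.mem_univ ω)
  simpa using this

open Classical in
lemma pm_comp' {α β' : Type*} [Fintype α] (X : Ω → α) (g : α → β') (b : β') :
    pm μ (fun ω => g (X ω)) b = ∑ a, if g a = b then pm μ X a else 0 := by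
  simp_rw [pm_eq]
  have h1 : ∀ a : α, (if g a = b then ∑ ω, (if X ω = a then μ ω else 0) else 0)
      = ∑ ω, (if X ω = a then (if g a = b then μ ω else 0) else 0) := by
    intro a
    split
    · rename_i h; exact Finset.sum_congr rfl fun ω _ => by simp [h]
    · rename_i h; simp [h]
  simp_rw [h1]
  rw [Finset.sum_comm]
  refine Finset.sum_congr rfl fun ω _ => ?_
  rw [Finset.sum_ite_eq Finset.univ (X ω) (fun a => if g a = b then μ ω else 0)]
  simp

lemma pm_le_comp (hμ0 : ∀ ω, 0 ≤ μ ω) {α β' : Type*} [Fintype α] (X : Ω → α) (g : α → β')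
    (a : α) : pm μ X a ≤ pm μ (fun ω => g (X ω)) (g a) := by
  classical
  rw [pm_comp' X g (g a)]
  have := Finset.single_le_sum (f := fun a' => if g a' = g a then pm μ X a' else 0)
    (fun i _ => by split <;> simp [pm_nonneg hμ0]) (Finset.mem_univ a)
  simpa using this

lemma pm_snd {α β' : Type*} [Fintype α] [Fintype β'] (X : Ω → α) (Y : Ω → β') (y : β') :
    pm μ Y y = ∑ x, pm μ (fun ω => (X ω, Y ω)) (x, y) := by
  classical
  have h : pm μ Y y = pm μ (fun ω => (X ω, Y ω).2) y := rfl
  rw [h, pm_comp' (fun ω => (X ω, Y ω)) Prod.snd y, Fintype.sum_prod_type]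
  refine Finset.sum_congr rfl fun x _ => ?_
  rw [Finset.sum_ite_eq' Finset.univ y (fun y' => pm μ (fun ω => (X ω, Y ω)) (x, y'))]
  simp


lemma logb_key {p q : ℝ} (hp : 0 ≤ p) (hq : 0 ≤ q) (hpq : 0 < p → 0 < q) :
    p * Real.logb 2 q - p * Real.logb 2 p ≤ (q - p) / Real.log 2 := by
  rcases eq_or_lt_of_le hp with h | h
  · rw [← h]
    simp only [zero_mul, sub_zero, zero_sub, sub_zero]
    positivity
  · have hq' := hpq h
    have hlog2 : (0:ℝ) < Real.log 2 := Real.log_pos one_lt_two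
    have key : p * Real.log q - p * Real.log p ≤ q - p := by
      have h1 := Real.log_le_sub_one_of_pos (show (0:ℝ) < q / p by positivity)
      have h2 : Real.log (q / p) = Real.log q - Real.log p :=
        Real.log_div (ne_of_gt hq') (ne_of_gt h)
      rw [h2] at h1
      have := mul_le_mul_of_nonneg_left h1 hp
      have h3 : p * (q / p - 1) = q - p := by field_simp
      nlinarith
    have h2 : p * (Real.log q / Real.log 2) - p * (Real.log p / Real.log 2)
        = (p * Real.log q - p * Real.log p) / Real.log 2 := by ring
    rw [Real.logb, Real.logb, h2]
    exact div_le_div_of_nonneg_right key hlog2.le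

/-- entropy is monotone under maps: `H(g ∘ X) ≤ H(X)` -/
lemma ent_comp_le (hμ0 : ∀ ω, 0 ≤ μ ω) {α β' : Type*} [Fintype α] [Fintype β']
    (X : Ω → α) (g : α → β') :
    ent μ (fun ω => g (X ω)) ≤ ent μ X := by
  classical
  rw [ent, ent, neg_le_neg_iff]
  have step1 : ∀ a : α, pm μ X a * Real.logb 2 (pm μ X a)
      ≤ pm μ X a * Real.logb 2 (pm μ (fun ω => g (X ω)) (g a)) := by
    intro a
    rcases eq_or_lt_of_le (pm_nonneg hμ0 X a) with h | h
    · rw [← h]; simp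
    · exact mul_le_mul_of_nonneg_left
        (Real.logb_le_logb_of_le one_lt_two h (pm_le_comp hμ0 X g a)) h.le
  calc ∑ a, pm μ X a * Real.logb 2 (pm μ X a)
      ≤ ∑ a, pm μ X a * Real.logb 2 (pm μ (fun ω => g (X ω)) (g a)) :=
        Finset.sum_le_sum (fun a _ => step1 a)
    _ = ∑ b, ∑ a ∈ Finset.univ.filter (fun a => g a = b),
          pm μ X a * Real.logb 2 (pm μ (fun ω => g (X ω)) (g a)) :=
        (Finset.sum_fiberwise Finset.univ g
          (fun a => pm μ X a * Real.logb 2 (pm μ (fun ω => g (X ω)) (g a)))).symm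
    _ = ∑ b, ∑ a ∈ Finset.univ.filter (fun a => g a = b),
          pm μ X a * Real.logb 2 (pm μ (fun ω => g (X ω)) b) :=
        Finset.sum_congr rfl fun b _ => Finset.sum_congr rfl fun a ha => by
          rw [(Finset.mem_filter.mp ha).2]
    _ = ∑ b, pm μ (fun ω => g (X ω)) b * Real.logb 2 (pm μ (fun ω => g (X ω)) b) := by
        refine Finset.sum_congr rfl fun b _ => ?_
        rw [← Finset.sum_mul]
        congr 1
        rw [pm_comp' X g b, Finset.sum_filter]

lemma condEnt_grouping {α β' : Type*} [Fintype α] [Fintype β'] (X : Ω → α) (Y : Ω → β') :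
    condEnt μ X Y = ∑ p : α × β', pm μ (fun ω => (X ω, Y ω)) p *
      (Real.logb 2 (pm μ Y p.2) - Real.logb 2 (pm μ (fun ω => (X ω, Y ω)) p)) := by
  classical
  rw [condEnt, ent, ent]
  have hY : ∀ y, pm μ Y y * Real.logb 2 (pm μ Y y)
      = ∑ x, pm μ (fun ω => (X ω, Y ω)) (x, y) * Real.logb 2 (pm μ Y y) := by
    intro y; rw [← Finset.sum_mul, ← pm_snd]
  simp_rw [hY]
  rw [← Fintype.sum_prod_type_right
    (f := fun p : α × β' => pm μ (fun ω => (X ω, Y ω)) p * Real.logb 2 (pm μ Y p.2))]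
  simp_rw [mul_sub, Finset.sum_sub_distrib]
  ring

lemma grouping_nonneg (hμ0 : ∀ ω, 0 ≤ μ ω) {α β' : Type*} [Fintype α] [Fintype β']
    (X : Ω → α) (Y : Ω → β') (p : α × β') :
    0 ≤ pm μ (fun ω => (X ω, Y ω)) p *
      (Real.logb 2 (pm μ Y p.2) - Real.logb 2 (pm μ (fun ω => (X ω, Y ω)) p)) := by
  rcases eq_or_lt_of_le (pm_nonneg hμ0 (fun ω => (X ω, Y ω)) p) with h | h
  · rw [← h]; simp
  · refine mul_nonneg h.le (sub_nonneg.mpr ?_)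
    exact Real.logb_le_logb_of_le one_lt_two h
      (pm_le_comp hμ0 (fun ω => (X ω, Y ω)) Prod.snd p)

lemma pm_pair_le_snd (hμ0 : ∀ ω, 0 ≤ μ ω) {α β' : Type*} [Fintype α] [Fintype β']
    (X : Ω → α) (Y : Ω → β') (p : α × β') :
    pm μ (fun ω => (X ω, Y ω)) p ≤ pm μ Y p.2 :=
  pm_le_comp hμ0 (fun ω => (X ω, Y ω)) Prod.snd p

lemma det_of_condEnt_zero (hμ0 : ∀ ω, 0 ≤ μ ω) {α β' : Type*} [Fintype α] [Fintype β']
    (X : Ω → α) (Y : Ω → β') (h : condEnt μ X Y = 0) {ω ω' : Ω}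
    (hω : 0 < μ ω) (hω' : 0 < μ ω') (hYe : Y ω = Y ω') : X ω = X ω' := by
  classical
  by_contra hne
  rw [condEnt_grouping] at h
  have hterms := (Finset.sum_eq_zero_iff_of_nonneg
    (fun p _ => grouping_nonneg hμ0 X Y p)).mp h
  set P : α × β' → ℝ := pm μ (fun ω => (X ω, Y ω)) with hP
  have key : ∀ ω₀ : Ω, 0 < μ ω₀ → Y ω₀ = Y ω → P (X ω₀, Y ω) = pm μ Y (Y ω) := by
    intro ω₀ h0 hy0
    have hmu := mu_le_pm hμ0 (fun ω => (X ω, Y ω)) ω₀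
    rw [show (X ω₀, Y ω₀) = (X ω₀, Y ω) by rw [hy0]] at hmu
    have hpos : 0 < P (X ω₀, Y ω) := lt_of_lt_of_le h0 hmu
    have hle : P (X ω₀, Y ω) ≤ pm μ Y (Y ω) := pm_pair_le_snd hμ0 X Y (X ω₀, Y ω)
    rcases eq_or_lt_of_le hle with he | hlt
    · exact he
    · exfalso
      have ht := hterms (X ω₀, Y ω) (Finset.mem_univ _)
      have : Real.logb 2 (pm μ Y (Y ω)) - Real.logb 2 (P (X ω₀, Y ω)) = 0 := by
        rcases mul_eq_zero.mp ht with h' | h'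
        · exact absurd h' (ne_of_gt hpos)
        · exact h'
      have := Real.logb_lt_logb one_lt_two hpos hlt
      linarith
  have p1 := key ω hω rfl
  have p2 := key ω' hω' hYe.symm
  have hYpos : 0 < pm μ Y (Y ω) := lt_of_lt_of_le hω (mu_le_pm hμ0 Y ω)
  have hsum : pm μ Y (Y ω) = ∑ x, P (x, Y ω) := pm_snd X Y (Y ω)
  have hswap : P (X ω, Y ω) + P (X ω', Y ω) ≤ ∑ x, P (x, Y ω) := by
    rw [← Finset.sum_pair (f := fun x => P (x, Y ω)) hne]
    exact Finset.sum_le_sum_of_subset_of_nonneg (Finset.subset_univ _)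
      (fun x _ _ => pm_nonneg hμ0 _ _)
  rw [← hsum, p1, p2] at hswap
  linarith

lemma ent_pair_of_det (hμ0 : ∀ ω, 0 ≤ μ ω) {α β' : Type*} [Fintype α] [Fintype β']
    (X : Ω → α) (Y : Ω → β')
    (h : ∀ ω ω', 0 < μ ω → 0 < μ ω' → Y ω = Y ω' → X ω = X ω') :
    ent μ (fun ω => (X ω, Y ω)) = ent μ Y := by
  classical
  set P : α × β' → ℝ := pm μ (fun ω => (X ω, Y ω)) with hP
  have hex : ∀ p : α × β', 0 < P p → ∃ ω₀, 0 < μ ω₀ ∧ X ω₀ = p.1 ∧ Y ω₀ = p.2 := by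
    intro p hp
    by_contra hc
    push_neg at hc
    have hzero : P p = 0 := by
      rw [hP, pm_eq]
      apply Finset.sum_eq_zero
      intro ω₀ _
      split
      · rename_i h0
        have hx0 : X ω₀ = p.1 := congrArg Prod.fst h0
        have hy0 : Y ω₀ = p.2 := congrArg Prod.snd h0
        rcases (hμ0 ω₀).eq_or_lt with hm | hm
        · exact hm.symm
        · exact absurd hy0 (hc ω₀ hm hx0)
      · rfl
    linarith
  have hzero : ∀ p : α × β', P p * (Real.logb 2 (pm μ Y p.2) - Real.logb 2 (P p)) = 0 := by
    intro p
    rcases eq_or_lt_of_le (pm_nonneg hμ0 (fun ω => (X ω, Y ω)) p) with hp | hp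
    · rw [← hP] at hp; rw [← hp]; ring
    · rw [← hP] at hp
      obtain ⟨ω₀, hm, hx, hy⟩ := hex p hp
      have heq : P p = pm μ Y p.2 := by
        rw [pm_snd X Y p.2]
        rw [show p = (p.1, p.2) from rfl]
        symm
        apply Finset.sum_eq_single p.1
        · intro x _ hxne
          by_contra hne0
          have hpos : 0 < P (x, p.2) :=
            lt_of_le_of_ne (pm_nonneg hμ0 _ _) (Ne.symm hne0)
          obtain ⟨ω₁, hm1, hx1, hy1⟩ := hex (x, p.2) hpos
          have hx1' : X ω₁ = x := hx1
          have hy1' : Y ω₁ = p.2 := hy1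
          exact hxne (by rw [← hx1', ← hx]; exact h ω₁ ω₀ hm1 hm (by rw [hy1', hy]))
        · intro hmem; exact absurd (Finset.mem_univ p.1) hmem
      rw [heq]
      ring
  have hce : condEnt μ X Y = 0 := by
    rw [condEnt_grouping]
    exact Finset.sum_eq_zero fun p _ => hzero p
  rw [condEnt] at hce
  linarith

lemma pm_fst {α β' : Type*} [Fintype α] [Fintype β'] (X : Ω → α) (Y : Ω → β') (x : α) :
    pm μ X x = ∑ y, pm μ (fun ω => (X ω, Y ω)) (x, y) := by
  classical
  have h : pm μ X x = pm μ (fun ω => (X ω, Y ω).1) x := rfl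
  rw [h, pm_comp' (fun ω => (X ω, Y ω)) Prod.fst x, Fintype.sum_prod_type]
  have hpull : ∀ x' : α,
      (∑ y, if (x', y).1 = x then pm μ (fun ω => (X ω, Y ω)) (x', y) else 0)
      = if x' = x then ∑ y, pm μ (fun ω => (X ω, Y ω)) (x', y) else 0 := by
    intro x'; split <;> simp_all
  simp_rw [hpull]
  rw [Finset.sum_ite_eq' Finset.univ x
    (fun x' => ∑ y, pm μ (fun ω => (X ω, Y ω)) (x', y))]
  simp

/-- subadditivity: `H(X,Y) ≤ H(X) + H(Y)` -/
lemma ent_pair_le (hμ0 : ∀ ω, 0 ≤ μ ω) (hμ1 : ∑ ω, μ ω = 1)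
    {α β' : Type*} [Fintype α] [Fintype β'] (X : Ω → α) (Y : Ω → β') :
    ent μ (fun ω => (X ω, Y ω)) ≤ ent μ X + ent μ Y := by
  classical
  set P : α × β' → ℝ := pm μ (fun ω => (X ω, Y ω)) with hP
  have eX : ent μ X = -∑ p : α × β', P p * Real.logb 2 (pm μ X p.1) := by
    rw [ent, Fintype.sum_prod_type]
    congr 1
    refine Finset.sum_congr rfl fun x _ => ?_
    nth_rewrite 1 [pm_fst X Y x]
    rw [Finset.sum_mul]
  have eY : ent μ Y = -∑ p : α × β', P p * Real.logb 2 (pm μ Y p.2) := by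
    rw [ent, Fintype.sum_prod_type_right]
    congr 1
    refine Finset.sum_congr rfl fun y _ => ?_
    nth_rewrite 1 [pm_snd X Y y]
    rw [Finset.sum_mul]
  rw [eX, eY, ent]
  rw [show -∑ p : α × β', P p * Real.logb 2 (pm μ X p.1)
      + -∑ p : α × β', P p * Real.logb 2 (pm μ Y p.2)
      = -(∑ p : α × β', (P p * Real.logb 2 (pm μ X p.1)
        + P p * Real.logb 2 (pm μ Y p.2))) by rw [Finset.sum_add_distrib]; ring]
  rw [neg_le_neg_iff]
  rw [Finset.sum_add_distrib]
  have key : ∀ p : α × β',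
      P p * Real.logb 2 (pm μ X p.1) + P p * Real.logb 2 (pm μ Y p.2)
        - P p * Real.logb 2 (P p)
      ≤ (pm μ X p.1 * pm μ Y p.2 - P p) / Real.log 2 := by
    intro p
    have h1 : P p ≤ pm μ X p.1 := pm_le_comp hμ0 (fun ω => (X ω, Y ω)) Prod.fst p
    have h2 : P p ≤ pm μ Y p.2 := pm_le_comp hμ0 (fun ω => (X ω, Y ω)) Prod.snd p
    rcases eq_or_lt_of_le (pm_nonneg hμ0 (fun ω => (X ω, Y ω)) p) with hp | hp
    · rw [← hP] at hp
      rw [← hp]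
      have : (0:ℝ) ≤ pm μ X p.1 * pm μ Y p.2 :=
        mul_nonneg (pm_nonneg hμ0 X _) (pm_nonneg hμ0 Y _)
      have hlog2 : (0:ℝ) < Real.log 2 := Real.log_pos one_lt_two
      simp only [zero_mul, add_zero, sub_zero, zero_add]
      positivity
    · rw [← hP] at hp
      have hx : 0 < pm μ X p.1 := lt_of_lt_of_le hp h1
      have hy : 0 < pm μ Y p.2 := lt_of_lt_of_le hp h2
      have := logb_key (p := P p) (q := pm μ X p.1 * pm μ Y p.2) hp.le
        (by positivity) (fun _ => by positivity)
      rw [Real.logb_mul hx.ne' hy.ne'] at this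
      linarith
  have hsumX : ∑ x, pm μ X x = 1 := by rw [sum_pm, hμ1]
  have hsumY : ∑ y, pm μ Y y = 1 := by rw [sum_pm, hμ1]
  have hsumP : ∑ p : α × β', P p = 1 := by rw [hP, sum_pm, hμ1]
  have hprod : ∑ p : α × β', pm μ X p.1 * pm μ Y p.2 = 1 := by
    rw [Fintype.sum_prod_type]
    simp_rw [← Finset.mul_sum]
    rw [← Finset.sum_mul, hsumX, hsumY, one_mul]
  have total := Finset.sum_le_sum (fun p (_ : p ∈ Finset.univ) => key p)
  rw [Finset.sum_sub_distrib, Finset.sum_add_distrib] at total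
  rw [show ∑ p : α × β', (pm μ X p.1 * pm μ Y p.2 - P p) / Real.log 2
      = ((∑ p : α × β', pm μ X p.1 * pm μ Y p.2) - ∑ p : α × β', P p) / Real.log 2 by
    rw [← Finset.sum_div, Finset.sum_sub_distrib]] at total
  rw [hprod, hsumP] at total
  simp only [sub_self, zero_div] at total
  linarith

lemma ent_prod_unif {β' γ : Type*} [Fintype β'] [Fintype γ] [Nonempty γ]
    (hμ1 : ∑ ω, μ ω = 1) (Q : Ω → β') (V : Ω → γ)
    (h : ∀ b v, pm μ (fun ω => (Q ω, V ω)) (b, v) = pm μ Q b * (Fintype.card γ : ℝ)⁻¹) :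
    ent μ (fun ω => (Q ω, V ω)) = ent μ Q + Real.logb 2 (Fintype.card γ) := by
  classical
  have hc : (0:ℝ) < Fintype.card γ := by
    have := Fintype.card_pos (α := γ); positivity
  rw [ent, Fintype.sum_prod_type]
  have hb : ∀ b, (∑ v : γ, pm μ (fun ω => (Q ω, V ω)) (b, v)
        * Real.logb 2 (pm μ (fun ω => (Q ω, V ω)) (b, v)))
      = pm μ Q b * Real.logb 2 (pm μ Q b) - pm μ Q b * Real.logb 2 (Fintype.card γ) := by
    intro b
    simp_rw [h b]
    rw [Finset.sum_const, Finset.card_univ, nsmul_eq_mul]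
    rcases eq_or_ne (pm μ Q b) 0 with h0 | h0
    · simp [h0]
    · rw [Real.logb_mul h0 (by positivity), Real.logb_inv]
      field_simp
      ring
  simp_rw [hb]
  rw [Finset.sum_sub_distrib, ← Finset.sum_mul, sum_pm, hμ1, one_mul, ent]
  ring

open Classical in
lemma fiber_card {G H : Type*} [AddCommGroup G] [AddCommGroup H] [Fintype G] [Fintype H]
    (f : G →+ H) (hs : Function.Surjective f) (v : H) :
    ((Finset.univ.filter (fun x => f x = v)).card : ℝ) * Fintype.card H = Fintype.card G := by
  classical
  have hsame : ∀ w : H, (Finset.univ.filter (fun x => f x = w)).card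
      = (Finset.univ.filter (fun x => f x = v)).card := by
    intro w
    obtain ⟨xv, hxv⟩ := hs v
    obtain ⟨xw, hxw⟩ := hs w
    apply Finset.card_nbij' (fun x => x + (xv - xw)) (fun x => x + (xw - xv))
    · intro x hx
      simp only [Finset.mem_coe, Finset.mem_filter, Finset.mem_univ, true_and] at *
      rw [map_add, map_sub, hxv, hxw, hx]
      abel
    · intro x hx
      simp only [Finset.mem_coe, Finset.mem_filter, Finset.mem_univ, true_and] at *
      rw [map_add, map_sub, hxv, hxw, hx]
      abel
    · intro x _; show x + (xv - xw) + (xw - xv) = x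
      rw [add_assoc, sub_add_sub_cancel, sub_self, add_zero]
    · intro x _; show x + (xw - xv) + (xv - xw) = x
      rw [add_assoc, sub_add_sub_cancel, sub_self, add_zero]
  have hcard : (Fintype.card G : ℕ)
      = ∑ w : H, (Finset.univ.filter (fun x => f x = w)).card := by
    rw [← Finset.card_univ]
    exact Finset.card_eq_sum_card_fiberwise (fun x _ => Finset.mem_univ (f x))
  have h2 : (Fintype.card G : ℕ)
      = Fintype.card H * (Finset.univ.filter (fun x => f x = v)).card := by
    rw [hcard]
    simp_rw [hsame]
    rw [Finset.sum_const, Finset.card_univ, smul_eq_mul]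
  rw [h2]
  push_cast
  ring

open Classical in
lemma pm_comp2 {α β' : Type*} [Fintype α] (X : Ω → α) (g : α → β') (W : Ω → β')
    (hW : ∀ ω, W ω = g (X ω)) (b : β') :
    pm μ W b = ∑ a, if g a = b then pm μ X a else 0 := by
  classical
  rw [show W = fun ω => g (X ω) from funext hW]
  rw [pm_comp' X g b]

open Classical in
lemma pm_QL {β' G γ : Type*} [Fintype β'] [Fintype G] [Fintype γ]
    [Nonempty G] [Nonempty γ]
    (Q : Ω → β') (Xs : Ω → G) (L : G → γ)
    (hfib : ∀ v : γ, ((Finset.univ.filter (fun x => L x = v)).card : ℝ)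
      * Fintype.card γ = Fintype.card G)
    (hXs : ∀ x, pm μ Xs x = ((Fintype.card G : ℝ))⁻¹)
    (hQX : ∀ b x, pm μ (fun ω => (Q ω, Xs ω)) (b, x) = pm μ Q b * pm μ Xs x)
    (b : β') (v : γ) :
    pm μ (fun ω => (Q ω, L (Xs ω))) (b, v) = pm μ Q b * (Fintype.card γ : ℝ)⁻¹ := by
  classical
  have hcG : (0:ℝ) < Fintype.card G := by
    have := Fintype.card_pos (α := G); positivity
  have hcγ : (0:ℝ) < Fintype.card γ := by
    have := Fintype.card_pos (α := γ); positivity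
  have h1 := pm_comp2 (μ := μ) (fun ω => (Q ω, Xs ω)) (fun p => (p.1, L p.2))
    (fun ω => (Q ω, L (Xs ω))) (fun ω => rfl) (b, v)
  rw [h1, Fintype.sum_prod_type]
  have h2 : ∀ (b' : β') (x : G), (if (((b', x) : β' × G).1, L (((b', x) : β' × G)).2) = (b, v)
      then pm μ (fun ω => (Q ω, Xs ω)) ((b', x) : β' × G) else 0)
      = if b' = b then (if L x = v then pm μ Q b * (Fintype.card G:ℝ)⁻¹ else 0) else 0 := by
    intro b' x
    by_cases hb : b' = b <;> by_cases hL : L x = v <;>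
      simp [hb, hL, Prod.ext_iff, hQX, hXs]
  refine Eq.trans (Finset.sum_congr rfl fun b' _ => Finset.sum_congr rfl fun x _ =>
    Eq.trans (by by_cases hb : b' = b <;> by_cases hL : L x = v <;>
      simp [hb, hL, Prod.ext_iff, hQX, hXs]) (h2 b' x).symm.symm) ?_
  have h3 : ∀ b' : β', (∑ x : G, if b' = b
        then (if L x = v then pm μ Q b * (Fintype.card G:ℝ)⁻¹ else 0) else 0)
      = if b' = b then (∑ x : G, if L x = v then pm μ Q b * (Fintype.card G:ℝ)⁻¹ else 0)
        else 0 := by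
    intro b'; split <;> simp
  refine Eq.trans (Finset.sum_congr rfl fun b' _ => h3 b') ?_
  rw [Finset.sum_eq_single b (fun b' _ hb' => if_neg hb')
    (fun h => absurd (Finset.mem_univ b) h), if_pos rfl]
  rw [← Finset.sum_filter, Finset.sum_const, nsmul_eq_mul]
  have hf := hfib v
  have hne : (Fintype.card γ : ℝ) ≠ 0 := hcγ.ne'
  have hGne : (Fintype.card G : ℝ) ≠ 0 := hcG.ne'
  have hfne : ((Finset.univ.filter (fun x => L x = v)).card : ℝ) ≠ 0 := by
    intro h0
    rw [h0, zero_mul] at hf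
    exact hGne hf.symm
  rw [← hf]
  field_simp

end L

set_option maxHeartbeats 1000000 in
theorem stmt16 (F E : Type) [Field F] [Fintype F] [Field E] [Fintype E] [Algebra F E]
    (Ω : Type) [Fintype Ω] (μ : Ω → ℝ)
    (hμ0 : ∀ ω, 0 ≤ μ ω) (hμ1 : ∑ ω, μ ω = 1)
    (K M n r t : ℕ) (hK : 2 ≤ K) (hM2 : 2 ≤ M) (hMK : M ≤ K)
    (hn : n + 1 ≤ K) (hr : r + n = K - M + 1)
    (Xs : Ω → Fin K → E)
    (hXs : ∀ x : Fin K → E, pm μ Xs x = ((Fintype.card E : ℝ) ^ K)⁻¹)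
    (β : Type) [Fintype β] (Q : Ω → β)
    (hQX : ∀ (b : β) (x : Fin K → E),
      pm μ (fun ω => (Q ω, Xs ω)) (b, x) = pm μ Q b * pm μ Xs x)
    (a : Fin t → Fin K → F)
    (z : Fin r → Fin K → F)
    (hli : LinearIndependent F
      (Sum.elim z (fun i : Fin (n + 1) => Pi.single (Fin.castLE hn i) (1 : F)) :
        Fin r ⊕ Fin (n + 1) → Fin K → F))
    (hZ : ∀ j : Fin r,
      condEnt μ (fun ω => ∑ i, z j i • Xs ω i)
        (fun ω => ((fun s : Fin t => ∑ i, a s i • Xs ω i), Q ω, Xs ω ⟨n, hn⟩)) = 0)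
    (hX : ∀ i : Fin n,
      condEnt μ (fun ω => Xs ω (Fin.castLE (Nat.le_of_succ_le hn) i))
        (fun ω => ((fun s : Fin t => ∑ i, a s i • Xs ω i), Q ω)) = 0) :
    ((K : ℝ) - (M : ℝ) + 1) * ((Module.finrank F E : ℝ) * Real.logb 2 (Fintype.card F)) ≤
      ent μ (fun ω (s : Fin t) => ∑ i, a s i • Xs ω i) := by
  classical
  -- notation
  let c : Fin r ⊕ Fin (n + 1) → Fin K → F :=
    Sum.elim z (fun i => Pi.single (Fin.castLE hn i) (1 : F))
  let L : (Fin K → E) → (Fin r ⊕ Fin (n + 1) → E) := fun x j => ∑ i, c j i • x i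
  let A : Ω → Fin t → E := fun ω s => ∑ i, a s i • Xs ω i
  let C : Ω → (Fin t → E) × β × E := fun ω => (A ω, Q ω, Xs ω ⟨n, hn⟩)
  -- L is additive
  have Ladd : ∀ x y, L (x + y) = L x + L y := by
    intro x y
    funext j
    show (∑ i, c j i • (x i + y i)) = (∑ i, c j i • x i) + ∑ i, c j i • y i
    simp [smul_add, Finset.sum_add_distrib]
  let Lhom : (Fin K → E) →+ (Fin r ⊕ Fin (n + 1) → E) := AddMonoidHom.mk' L Ladd
  -- `ι` : coefficient map, injective by linear independence
  let ι : (Fin r ⊕ Fin (n + 1) → F) →ₗ[F] (Fin K → F) :=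
    { toFun := fun y => ∑ j, y j • c j
      map_add' := by intro y1 y2; simp [add_smul, Finset.sum_add_distrib]
      map_smul' := by intro m y; simp [Finset.smul_sum, smul_smul] }
  have hker : LinearMap.ker ι = ⊥ := by
    rw [LinearMap.ker_eq_bot']
    intro y hy
    exact funext ((Fintype.linearIndependent_iff.mp hli) y hy)
  obtain ⟨g, hg⟩ := LinearMap.exists_leftInverse_of_injective ι hker
  let d : Fin K → (Fin r ⊕ Fin (n + 1)) → F := fun i => g (Pi.single i 1)
  have hkey : ∀ j, ∑ i, c j i • d i = (Pi.single j (1 : F) : Fin r ⊕ Fin (n + 1) → F) := by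
    intro j
    have h1 : (∑ i, c j i • d i) = g (∑ i, c j i • (Pi.single i (1 : F) : Fin K → F)) := by
      rw [map_sum]
      exact Finset.sum_congr rfl fun i _ => (map_smul g (c j i) ((Pi.single i (1:F)) : Fin K → F)).symm
    have h2 : (∑ i, c j i • (Pi.single i (1 : F) : Fin K → F)) = c j := by
      funext i'
      rw [Finset.sum_apply]
      rw [Finset.sum_eq_single i' (fun i _ hne => by
        show c j i • (Pi.single i (1:F) : Fin K → F) i' = 0
        rw [Pi.single_eq_of_ne (Ne.symm hne), smul_zero])
        (fun hmem => absurd (Finset.mem_univ i') hmem)]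
      show c j i' • (Pi.single i' (1:F) : Fin K → F) i' = c j i'
      rw [Pi.single_eq_same, smul_eq_mul, mul_one]
    have h3 : ι (Pi.single j 1) = c j := by
      show (∑ j', (Pi.single j (1 : F) : Fin r ⊕ Fin (n + 1) → F) j' • c j') = c j
      rw [Finset.sum_eq_single j (fun j' _ hne => by
        rw [Pi.single_eq_of_ne hne, zero_smul])
        (fun hmem => absurd (Finset.mem_univ j) hmem)]
      rw [Pi.single_eq_same, one_smul]
    rw [h1, h2, ← h3]
    exact LinearMap.congr_fun hg (Pi.single j 1)
  -- surjectivity of L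
  have hsurj : Function.Surjective L := by
    intro v
    refine ⟨fun i => ∑ j, d i j • v j, ?_⟩
    funext j
    show (∑ i, c j i • ∑ j', d i j' • v j') = v j
    have hstep : ∀ i, c j i • (∑ j', d i j' • v j') = ∑ j', (c j i * d i j') • v j' := by
      intro i
      rw [Finset.smul_sum]
      exact Finset.sum_congr rfl fun j' _ => smul_smul (c j i) (d i j') (v j')
    simp_rw [hstep]
    rw [Finset.sum_comm]
    have h4 : ∀ j', (∑ i, (c j i * d i j') • v j') = (∑ i, c j i * d i j') • v j' := by
      intro j'; rw [Finset.sum_smul]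
    simp_rw [h4]
    have h5 : ∀ j', (∑ i, c j i * d i j') = (Pi.single j (1 : F) : Fin r ⊕ Fin (n+1) → F) j' := by
      intro j'
      have := congrFun (hkey j) j'
      rw [Finset.sum_apply] at this
      simpa [smul_eq_mul] using this
    simp_rw [h5]
    rw [Finset.sum_eq_single j (fun j' _ hne => by
      rw [Pi.single_eq_of_ne hne, zero_smul])
      (fun hmem => absurd (Finset.mem_univ j) hmem)]
    rw [Pi.single_eq_same, one_smul]
  -- uniformity
  have hXsu : ∀ x : Fin K → E, pm μ Xs x = ((Fintype.card (Fin K → E) : ℝ))⁻¹ := by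
    intro x
    rw [hXs x]
    congr 1
    rw [Fintype.card_fun, Fintype.card_fin]
    push_cast
    ring
  have hUval : ∀ (b : β) (v : Fin r ⊕ Fin (n + 1) → E),
      pm μ (fun ω => (Q ω, L (Xs ω))) (b, v)
        = pm μ Q b * ((Fintype.card (Fin r ⊕ Fin (n + 1) → E) : ℝ))⁻¹ :=
    pm_QL Q Xs L (fun v => fiber_card Lhom hsurj v) hXsu hQX
  let L1 : (Fin K → E) → E := fun x => x ⟨n, hn⟩
  have hL1surj : Function.Surjective L1 := fun e => ⟨fun _ => e, rfl⟩
  let L1hom : (Fin K → E) →+ E := AddMonoidHom.mk' L1 (fun x y => rfl)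
  have hBval : ∀ (b : β) (v : E),
      pm μ (fun ω => (Q ω, Xs ω ⟨n, hn⟩)) (b, v)
        = pm μ Q b * ((Fintype.card E : ℝ))⁻¹ :=
    pm_QL Q Xs L1 (fun v => fiber_card L1hom hL1surj v) hXsu hQX
  -- entropy computations
  have entU : ent μ (fun ω => (Q ω, L (Xs ω)))
      = ent μ Q + Real.logb 2 (Fintype.card (Fin r ⊕ Fin (n + 1) → E)) :=
    ent_prod_unif hμ1 Q (fun ω => L (Xs ω)) hUval
  have entB : ent μ (fun ω => (Q ω, Xs ω ⟨n, hn⟩))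
      = ent μ Q + Real.logb 2 (Fintype.card E) :=
    ent_prod_unif hμ1 Q (fun ω => Xs ω ⟨n, hn⟩) hBval
  -- determinism of L (Xs ω) from C
  have hdet : ∀ ω ω', 0 < μ ω → 0 < μ ω' → C ω = C ω' → L (Xs ω) = L (Xs ω') := by
    intro ω ω' h h' hCe
    have hA' : A ω = A ω' := congrArg Prod.fst hCe
    have hQ' : Q ω = Q ω' := congrArg (fun p => p.2.1) hCe
    have hXn : Xs ω ⟨n, hn⟩ = Xs ω' ⟨n, hn⟩ := congrArg (fun p => p.2.2) hCe
    funext j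
    have hev : ∀ (i : Fin (n+1)) (x : Fin K → E),
        (∑ i', (Pi.single (Fin.castLE hn i) (1 : F) : Fin K → F) i' • x i') = x (Fin.castLE hn i) := by
      intro i x
      rw [Finset.sum_eq_single (Fin.castLE hn i) (fun i' _ hne => by
        rw [Pi.single_eq_of_ne hne, zero_smul])
        (fun hmem => absurd (Finset.mem_univ _) hmem)]
      rw [Pi.single_eq_same, one_smul]
    match j with
    | Sum.inl j =>
      exact det_of_condEnt_zero hμ0 _ _ (hZ j) h h' hCe
    | Sum.inr i =>
      show (∑ i', (Pi.single (Fin.castLE hn i) (1 : F) : Fin K → F) i' • Xs ω i')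
        = ∑ i', (Pi.single (Fin.castLE hn i) (1 : F) : Fin K → F) i' • Xs ω' i'
      rw [hev i (Xs ω), hev i (Xs ω')]
      rcases lt_or_eq_of_le (Nat.lt_succ_iff.mp i.isLt) with hi | hi
      · have e1 : Fin.castLE hn i = Fin.castLE (Nat.le_of_succ_le hn) (⟨i.val, hi⟩ : Fin n) :=
          Fin.ext rfl
        rw [e1]
        exact det_of_condEnt_zero hμ0 _ _ (hX ⟨i.val, hi⟩) h h'
          (by show (A ω, Q ω) = (A ω', Q ω'); rw [hA', hQ'])
      · have e2 : Fin.castLE hn i = ⟨n, hn⟩ := Fin.ext hi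
        rw [e2]
        exact hXn
  -- the chain of inequalities
  have hdetEnt : ent μ (fun ω => (L (Xs ω), C ω)) = ent μ C :=
    ent_pair_of_det hμ0 _ _ hdet
  have hUle : ent μ (fun ω => (Q ω, L (Xs ω))) ≤ ent μ (fun ω => (L (Xs ω), C ω)) :=
    ent_comp_le hμ0 (fun ω => (L (Xs ω), C ω)) (fun p => (p.2.2.1, p.1))
  have hCle : ent μ C ≤ ent μ A + ent μ (fun ω => (Q ω, Xs ω ⟨n, hn⟩)) :=
    ent_pair_le hμ0 hμ1 A (fun ω => (Q ω, Xs ω ⟨n, hn⟩))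
  -- cardinalities
  have hcard : (Fintype.card (Fin r ⊕ Fin (n + 1) → E))
      = (Fintype.card E) ^ (r + n + 1) := by
    rw [Fintype.card_fun, Fintype.card_sum, Fintype.card_fin, Fintype.card_fin]
    ring_nf
  have hcardF : (Fintype.card E) = (Fintype.card F) ^ (Module.finrank F E) :=
    Module.card_eq_pow_finrank
  have hlogE : Real.logb 2 (Fintype.card E)
      = (Module.finrank F E : ℝ) * Real.logb 2 (Fintype.card F) := by
    rw [hcardF]
    push_cast
    rw [Real.logb_pow]
  have hlogBig : Real.logb 2 (Fintype.card (Fin r ⊕ Fin (n + 1) → E))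
      = ((r : ℝ) + n + 1) * Real.logb 2 (Fintype.card E) := by
    rw [hcard]
    push_cast
    rw [Real.logb_pow]
    push_cast
    ring
  have hrn : ((r : ℝ) + n) = (K : ℝ) - M + 1 := by
    have : ((r + n : ℕ) : ℝ) = ((K - M + 1 : ℕ) : ℝ) := by rw [hr]
    push_cast [Nat.cast_sub hMK] at this
    linarith
  have hfinal : ((K : ℝ) - M + 1) * Real.logb 2 (Fintype.card E) ≤ ent μ A := by
    rw [← hrn]
    nlinarith [entU, entB, hdetEnt, hUle, hCle, hlogBig]
  rw [← hlogE]
  exact hfinal
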